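/- There exists N₀ such that for every integer N ≥ N₀ with gcd(N, 6) = 1, every finite additive abelian group G of cardinality N, and every useful pair (S, k) with S ⊆ G, at least 80% of the k-element subsets X of S satisfy both of the following: X is dissociated, and the number of quadruples (x₁, x₂, s₁, s₂) ∈ X × X × S × S with x₁ ≠ x₂, s₁ ≠ s₂ and x₁ + x₂ = s₁ + s₂ is at most |S|/(log N)¹⁵. -/

import Mathlib

open Finset

/-- The restricted sumset `E[X] = X +̂ X = {x + x' : x, x' ∈ X, x ≠ x'}`. -/
def EHat {G : Type*} [AddCommGroup G] [DecidableEq G] (X : Finset G) : Finset G :=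
  ((X ×ˢ X).filter fun p => p.1 ≠ p.2).image fun p => p.1 + p.2

/-- The number of quadruples `(x₁, x₂, s₁, s₂) ∈ X × X × S × S` with `x₁ ≠ x₂`,
`s₁ ≠ s₂` and `x₁ + x₂ = s₁ + s₂`. -/
def quadCount {G : Type*} [AddCommGroup G] [DecidableEq G] (X S : Finset G) : ℕ :=
  (((X ×ˢ X) ×ˢ (S ×ˢ S)).filter fun q =>
    q.1.1 ≠ q.1.2 ∧ q.2.1 ≠ q.2.2 ∧ q.1.1 + q.1.2 = q.2.1 + q.2.2).card

/-- `X` has lack of structure with respect to `S` (in a group of cardinality `N`). -/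
def LackOfStructure {G : Type*} [AddCommGroup G] [DecidableEq G]
    (X S : Finset G) (N : ℕ) : Prop :=
  (quadCount X S : ℝ) ≤ (S.card : ℝ) / Real.log N ^ 15

/-- A pair `(S, k)` is useful. -/
def Useful {G : Type*} [AddCommGroup G] [Fintype G] [DecidableEq G]
    (S : Finset G) (k : ℕ) : Prop :=
  -- (i) cardinality
  ((Fintype.card G : ℝ) / (2 ^ 12 * Real.log (Fintype.card G) ^ 20) < (S.card : ℝ) ∧
    (S.card : ℝ) ≤ (Fintype.card G : ℝ) / Real.log (Fintype.card G) ^ 20) ∧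
  -- (ii) good clique size
  (Real.logb 2 (Fintype.card G) ≤ (k : ℝ) ∧
    (k : ℝ) ≤ 3 * Real.logb 2 (Fintype.card G) ∧
    (Fintype.card G : ℝ) / (2 * Real.log (Fintype.card G) ^ 8) <
      (S.card.choose k : ℝ) * 2 ^ (-(k.choose 2 : ℤ)) ∧
    (S.card.choose k : ℝ) * 2 ^ (-(k.choose 2 : ℤ)) ≤
      (Fintype.card G : ℝ) / Real.log (Fintype.card G) ^ 8) ∧
  -- (iii) lack of structure for at least 90% of k-element subsets of S
  9 * (S.powersetCard k).card ≤
    10 * Nat.card {X : Finset G // X ⊆ S ∧ X.card = k ∧ LackOfStructure X S (Fintype.card G)}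

/-- A set `X` is dissociated: any two representations of an element as a sum of four
elements of `X` agree up to permutation. -/
def Dissociated {G : Type*} [AddCommGroup G] (X : Finset G) : Prop :=
  ∀ x₁ x₂ x₃ x₄ y₁ y₂ y₃ y₄ : G, x₁ ∈ X → x₂ ∈ X → x₃ ∈ X → x₄ ∈ X →
    y₁ ∈ X → y₂ ∈ X → y₃ ∈ X → y₄ ∈ X →
    x₁ + x₂ + x₃ + x₄ = y₁ + y₂ + y₃ + y₄ →
    ({x₁, x₂, x₃, x₄} : Multiset G) = {y₁, y₂, y₃, y₄}

section AuxLemmas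

open Finset

instance dissociatedDecidable {G : Type*} [AddCommGroup G] [Fintype G] [DecidableEq G] :
    DecidablePred (fun X : Finset G => Dissociated X) := fun X => by
  unfold Dissociated; infer_instance

noncomputable instance lackOfStructureDecidable {G : Type*} [AddCommGroup G] [DecidableEq G]
    (S : Finset G) (N : ℕ) : DecidablePred (fun X : Finset G => LackOfStructure X S N) :=
  fun X => by unfold LackOfStructure; infer_instance

lemma zsmul_injective {G : Type*} [AddCommGroup G] [Fintype G] {m : ℤ}
    (hm : Nat.Coprime m.natAbs (Fintype.card G)) :
    Function.Injective fun g : G => m • g := by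
  intro a b hab
  simp only at hab
  have h0 : m • (a - b) = 0 := by rw [smul_sub, hab, sub_self]
  have h1 : m.natAbs • (a - b) = 0 := by
    rcases Int.natAbs_eq m with h | h
    · rw [← natCast_zsmul, ← h, h0]
    · rw [← natCast_zsmul, show ((m.natAbs : ℤ)) = -m by omega, neg_zsmul, h0, neg_zero]
  have h2 : addOrderOf (a - b) ∣ m.natAbs := addOrderOf_dvd_of_nsmul_eq_zero h1
  have h3 : addOrderOf (a - b) ∣ Fintype.card G := addOrderOf_dvd_card
  have h4 : addOrderOf (a - b) ∣ 1 := hm ▸ Nat.dvd_gcd h2 h3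
  have h5 : a - b = 0 := by
    have := AddMonoid.addOrderOf_eq_one_iff.mp (Nat.dvd_one.mp h4)
    exact this
  exact sub_eq_zero.mp h5

lemma exists_relation_of_not_dissociated {G : Type*} [AddCommGroup G] [DecidableEq G]
    {X : Finset G} (h : ¬ Dissociated X) :
    ∃ (m : ℕ) (c : Fin (m + 1) → ℤ) (z : Fin (m + 1) → G),
      1 ≤ m ∧ m ≤ 7 ∧ (∀ i, c i ≠ 0 ∧ |c i| ≤ 4) ∧ Function.Injective z ∧
      (∀ i, z i ∈ X) ∧ ∑ i, c i • z i = 0 := by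
  rw [Dissociated] at h
  push_neg at h
  obtain ⟨x1, x2, x3, x4, y1, y2, y3, y4, hx1, hx2, hx3, hx4, hy1, hy2, hy3, hy4, hsum, hne⟩ := h
  set A : Multiset G := {x1, x2, x3, x4} with hA
  set B : Multiset G := {y1, y2, y3, y4} with hB
  have hAX : ∀ g ∈ A, g ∈ X := by
    intro g hg
    simp only [hA, Multiset.insert_eq_cons, Multiset.mem_cons, Multiset.mem_singleton] at hg
    rcases hg with h | h | h | h <;> subst h <;> assumption
  have hBX : ∀ g ∈ B, g ∈ X := by
    intro g hg
    simp only [hB, Multiset.insert_eq_cons, Multiset.mem_cons, Multiset.mem_singleton] at hg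
    rcases hg with h | h | h | h <;> subst h <;> assumption
  have hAcard : Multiset.card A = 4 := by simp [hA]
  have hBcard : Multiset.card B = 4 := by simp [hB]
  have hAsum : A.sum = x1 + x2 + x3 + x4 := by
    simp only [hA, Multiset.insert_eq_cons, Multiset.sum_cons, Multiset.sum_singleton]
    abel
  have hBsum : B.sum = y1 + y2 + y3 + y4 := by
    simp only [hB, Multiset.insert_eq_cons, Multiset.sum_cons, Multiset.sum_singleton]
    abel
  have hABsum : A.sum = B.sum := by rw [hAsum, hBsum, hsum]
  set A' : Multiset G := A - B with hA'
  set B' : Multiset G := B - A with hB'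
  have hA'decomp : A' + A ∩ B = A := Multiset.sub_add_inter A B
  have hB'decomp : B' + A ∩ B = B := by
    rw [Multiset.inter_comm]
    exact Multiset.sub_add_inter B A
  have hcardA' : Multiset.card A' + Multiset.card (A ∩ B) = 4 := by
    rw [← Multiset.card_add, hA'decomp, hAcard]
  have hcardB' : Multiset.card B' + Multiset.card (A ∩ B) = 4 := by
    rw [← Multiset.card_add, hB'decomp, hBcard]
  have hsum' : A'.sum = B'.sum := by
    have h1 : A'.sum + (A ∩ B).sum = B'.sum + (A ∩ B).sum := by
      rw [← Multiset.sum_add, ← Multiset.sum_add, hA'decomp, hB'decomp, hABsum]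
    exact add_right_cancel h1
  have hA'ne : A' ≠ 0 := by
    intro h0
    have hle : A ≤ B := tsub_eq_zero_iff_le.mp h0
    exact hne (Multiset.eq_of_le_of_card_le hle (by rw [hAcard, hBcard]))
  have hB'ne : B' ≠ 0 := by
    intro h0
    rw [h0] at hcardB'
    simp only [Multiset.card_zero, zero_add] at hcardB'
    have : Multiset.card A' = 0 := by omega
    exact hA'ne (Multiset.card_eq_zero.mp this)
  have hdisj : ∀ g, g ∈ A' → g ∉ B' := by
    intro g h1 h2
    rw [hA', ← Multiset.count_pos, Multiset.count_sub] at h1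
    rw [hB', ← Multiset.count_pos, Multiset.count_sub] at h2
    omega
  set T : Finset G := A'.toFinset ∪ B'.toFinset with hT
  have hTX : ∀ g ∈ T, g ∈ X := by
    intro g hg
    rw [hT, Finset.mem_union, Multiset.mem_toFinset, Multiset.mem_toFinset] at hg
    rcases hg with hg | hg
    · exact hAX g (Multiset.mem_of_le tsub_le_self hg)
    · exact hBX g (Multiset.mem_of_le tsub_le_self hg)
  have hT2 : 2 ≤ T.card := by
    obtain ⟨a, ha⟩ := Multiset.exists_mem_of_ne_zero hA'ne
    obtain ⟨b, hb⟩ := Multiset.exists_mem_of_ne_zero hB'ne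
    refine Finset.one_lt_card.mpr ⟨a, ?_, b, ?_, ?_⟩
    · exact Finset.mem_union_left _ (Multiset.mem_toFinset.mpr ha)
    · exact Finset.mem_union_right _ (Multiset.mem_toFinset.mpr hb)
    · intro hab
      exact hdisj a ha (hab ▸ hb)
  have hT8 : T.card ≤ 8 := by
    calc T.card ≤ A'.toFinset.card + B'.toFinset.card := Finset.card_union_le _ _
      _ ≤ Multiset.card A' + Multiset.card B' := by
          exact Nat.add_le_add (Multiset.toFinset_card_le _) (Multiset.toFinset_card_le _)
      _ ≤ 8 := by omega
  have key : ∑ g ∈ T, ((Multiset.count g A' : ℤ) - (Multiset.count g B' : ℤ)) • g = 0 := by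
    have e1 : ∀ M : Multiset G, M.toFinset ⊆ T →
        ∑ g ∈ T, (Multiset.count g M : ℤ) • g = M.sum := by
      intro M hM
      rw [← Finset.sum_subset hM (fun g _ hg => by
        rw [Multiset.count_eq_zero_of_notMem (fun hmem => hg (Multiset.mem_toFinset.mpr hmem))]
        simp)]
      calc ∑ g ∈ M.toFinset, (Multiset.count g M : ℤ) • g
          = ∑ g ∈ M.toFinset, Multiset.count g M • g := by
            refine Finset.sum_congr rfl fun g _ => ?_
            rw [natCast_zsmul]
        _ = (M.map id).sum := (Finset.sum_multiset_map_count M id).symm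
        _ = M.sum := by rw [Multiset.map_id]
    simp only [sub_smul]
    rw [Finset.sum_sub_distrib, e1 A' Finset.subset_union_left,
      e1 B' Finset.subset_union_right, hsum', sub_self]
  obtain ⟨m, hm⟩ : ∃ m, T.card = m + 1 := ⟨T.card - 1, by omega⟩
  let e := Finset.equivFinOfCardEq hm
  refine ⟨m,
    fun i => (Multiset.count ((e.symm i : G)) A' : ℤ) - (Multiset.count ((e.symm i : G)) B' : ℤ),
    fun i => (e.symm i : G), by omega, by omega, ?_, ?_, ?_, ?_⟩
  · intro i
    beta_reduce
    have hgT : (e.symm i : G) ∈ T := (e.symm i).2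
    set g : G := (e.symm i : G) with hg
    have hle4A : Multiset.count g A' ≤ 4 := le_trans (Multiset.count_le_card g A') (by omega)
    have hle4B : Multiset.count g B' ≤ 4 := le_trans (Multiset.count_le_card g B') (by omega)
    rw [hT, Finset.mem_union, Multiset.mem_toFinset, Multiset.mem_toFinset] at hgT
    constructor
    · rcases hgT with hgT | hgT
      · have h1 : 0 < Multiset.count g A' := Multiset.count_pos.mpr hgT
        have h2 : Multiset.count g B' = 0 :=
          Multiset.count_eq_zero.mpr (hdisj g hgT)
        omega
      · have h1 : 0 < Multiset.count g B' := Multiset.count_pos.mpr hgT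
        have h2 : Multiset.count g A' = 0 :=
          Multiset.count_eq_zero.mpr (fun hmem => hdisj g hmem hgT)
        omega
    · rw [abs_le]
      omega
  · exact Subtype.val_injective.comp e.symm.injective
  · intro i
    exact hTX _ (e.symm i).2
  · have heq := Fintype.sum_equiv e
      (fun t : T => ((Multiset.count (t : G) A' : ℤ) - (Multiset.count (t : G) B' : ℤ)) • (t : G))
      (fun i => ((Multiset.count ((e.symm i : G)) A' : ℤ) -
        (Multiset.count ((e.symm i : G)) B' : ℤ)) • ((e.symm i : G)))
      (fun t => by simp)
    rw [← heq, Finset.sum_coe_sort T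
      (fun g => ((Multiset.count g A' : ℤ) - (Multiset.count g B' : ℤ)) • g), key]

lemma sols_card_le {G : Type*} [AddCommGroup G] [Fintype G] [DecidableEq G] {m : ℕ}
    (c : Fin (m + 1) → ℤ) (hc : Nat.Coprime (c (Fin.last m)).natAbs (Fintype.card G))
    (S : Finset G) :
    ((Fintype.piFinset fun _ : Fin (m + 1) => S).filter
      fun z => Function.Injective z ∧ ∑ i, c i • z i = 0).card ≤ S.card ^ m := by
  have key := Finset.card_le_card_of_injOn (fun (z : Fin (m + 1) → G) => z ∘ Fin.castSucc)
    (s := (Fintype.piFinset fun _ : Fin (m + 1) => S).filter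
      fun z => Function.Injective z ∧ ∑ i, c i • z i = 0)
    (t := Fintype.piFinset fun _ : Fin m => S) ?_ ?_
  · rwa [Fintype.card_piFinset_const] at key
  · intro z hz
    rw [Finset.mem_coe, Finset.mem_filter] at hz
    rw [Finset.mem_coe, Fintype.mem_piFinset]
    exact fun i => Fintype.mem_piFinset.mp hz.1 i.castSucc
  · intro z hz w hw h
    rw [Finset.mem_coe, Finset.mem_filter] at hz hw
    obtain ⟨-, -, hzsum⟩ := hz
    obtain ⟨-, -, hwsum⟩ := hw
    funext i
    refine Fin.lastCases ?_ (fun i => congrFun h i) i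
    have hpart : ∑ j : Fin m, c j.castSucc • z j.castSucc
        = ∑ j : Fin m, c j.castSucc • w j.castSucc := by
      refine Finset.sum_congr rfl fun j _ => ?_
      rw [show z j.castSucc = w j.castSucc from congrFun h j]
    rw [Fin.sum_univ_castSucc] at hzsum hwsum
    have h1 : c (Fin.last m) • z (Fin.last m) = c (Fin.last m) • w (Fin.last m) := by
      rw [eq_neg_of_add_eq_zero_right hzsum, eq_neg_of_add_eq_zero_right hwsum, hpart]
    exact zsmul_injective hc h1

lemma card_supersets_le {G : Type*} [AddCommGroup G] [DecidableEq G] (S : Finset G) (k m : ℕ)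
    (z : Fin (m + 1) → G) (hz : Function.Injective z) (hzS : ∀ i, z i ∈ S) :
    ((S.powersetCard k).filter fun X => ∀ i, z i ∈ X).card ≤
      (S.card - (m + 1)).choose (k - (m + 1)) := by
  classical
  set Z : Finset G := Finset.image z Finset.univ with hZ
  have hZcard : Z.card = m + 1 := by
    rw [hZ, Finset.card_image_of_injective _ hz, Finset.card_univ, Fintype.card_fin]
  have hZS : Z ⊆ S := by
    intro g hg
    simp only [hZ, Finset.mem_image] at hg
    obtain ⟨i, -, rfl⟩ := hg
    exact hzS i
  have hmain := Finset.card_le_card_of_injOn (fun X => X \ Z)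
    (s := (S.powersetCard k).filter fun X => ∀ i, z i ∈ X)
    (t := (S \ Z).powersetCard (k - (m + 1))) ?_ ?_
  · calc ((S.powersetCard k).filter fun X => ∀ i, z i ∈ X).card
        ≤ ((S \ Z).powersetCard (k - (m + 1))).card := hmain
      _ = (S \ Z).card.choose (k - (m + 1)) := Finset.card_powersetCard _ _
      _ = (S.card - (m + 1)).choose (k - (m + 1)) := by rw [Finset.card_sdiff_of_subset hZS, hZcard]
  · intro X hX
    rw [Finset.mem_coe, Finset.mem_filter, Finset.mem_powersetCard] at hX
    obtain ⟨⟨hXS, hXcard⟩, hXZ⟩ := hX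
    have hZX : Z ⊆ X := by
      intro g hg
      simp only [hZ, Finset.mem_image] at hg
      obtain ⟨i, -, rfl⟩ := hg
      exact hXZ i
    rw [Finset.mem_coe, Finset.mem_powersetCard]
    refine ⟨Finset.sdiff_subset_sdiff hXS (Finset.Subset.refl Z), ?_⟩
    rw [Finset.card_sdiff_of_subset hZX, hXcard, hZcard]
  · intro X hX Y hY hXY
    rw [Finset.mem_coe, Finset.mem_filter] at hX hY
    have hZX : Z ⊆ X := by
      intro g hg
      simp only [hZ, Finset.mem_image] at hg
      obtain ⟨i, -, rfl⟩ := hg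
      exact hX.2 i
    have hZY : Z ⊆ Y := by
      intro g hg
      simp only [hZ, Finset.mem_image] at hg
      obtain ⟨i, -, rfl⟩ := hg
      exact hY.2 i
    have hXY' : X \ Z = Y \ Z := hXY
    have : X \ Z ∪ Z = Y \ Z ∪ Z := by rw [hXY']
    rwa [Finset.sdiff_union_of_subset hZX, Finset.sdiff_union_of_subset hZY] at this

lemma choose_le_mul_choose (n j : ℕ) (hn : 1 ≤ n) :
    n.choose j ≤ n * (n - 1).choose (j - 1) := by
  cases j with
  | zero => simpa using hn
  | succ j =>
    obtain ⟨p, rfl⟩ : ∃ p, n = p + 1 := ⟨n - 1, by omega⟩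
    calc (p + 1).choose (j + 1) ≤ (p + 1).choose (j + 1) * (j + 1) :=
          Nat.le_mul_of_pos_right _ (by omega)
      _ = (p + 1) * p.choose j := (Nat.add_one_mul_choose_eq p j).symm
      _ = (p + 1) * ((p + 1) - 1).choose ((j + 1) - 1) := by simp
lemma choose_le_pow_mul_choose (t : ℕ) : ∀ n j : ℕ, t ≤ n →
    n.choose j ≤ n ^ t * (n - t).choose (j - t) := by
  induction t with
  | zero => intro n j _; simp
  | succ t ih =>
    intro n j ht
    calc n.choose j ≤ n * (n - 1).choose (j - 1) := choose_le_mul_choose n j (by omega)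
      _ ≤ n * ((n - 1) ^ t * ((n - 1) - t).choose ((j - 1) - t)) :=
          Nat.mul_le_mul le_rfl (ih (n - 1) (j - 1) (by omega))
      _ ≤ n * (n ^ t * (n - (t + 1)).choose (j - (t + 1))) := by
          have h1 : (n - 1) - t = n - (t + 1) := by omega
          have h2 : (j - 1) - t = j - (t + 1) := by omega
          rw [h1, h2]
          exact Nat.mul_le_mul le_rfl
            (Nat.mul_le_mul (Nat.pow_le_pow_left (by omega) t) le_rfl)
      _ = n ^ (t + 1) * (n - (t + 1)).choose (j - (t + 1)) := by ring
lemma choose_mul_descFactorial_eq (t : ℕ) : ∀ s k : ℕ, t ≤ k → k ≤ s →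
    s.choose k * k.descFactorial t = s.descFactorial t * (s - t).choose (k - t) := by
  induction t with
  | zero => intro s k _ _; simp
  | succ t ih =>
    intro s k h1 h2
    rw [Nat.descFactorial_succ, Nat.descFactorial_succ]
    have hkey : (s - t).choose (k - t) * (k - t) = (s - t) * ((s - t) - 1).choose ((k - t) - 1) := by
      have hs : s - t = (s - t - 1) + 1 := by omega
      have hk : k - t = (k - t - 1) + 1 := by omega
      calc (s - t).choose (k - t) * (k - t)
          = (s - t - 1 + 1).choose (k - t - 1 + 1) * (k - t - 1 + 1) := by rw [← hs, ← hk]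
        _ = (s - t - 1 + 1) * (s - t - 1).choose (k - t - 1) := (Nat.add_one_mul_choose_eq _ _).symm
        _ = (s - t) * ((s - t) - 1).choose ((k - t) - 1) := by rw [← hs]
    have e1 : (s - t) - 1 = s - (t + 1) := by omega
    have e2 : (k - t) - 1 = k - (t + 1) := by omega
    calc s.choose k * ((k - t) * k.descFactorial t)
        = (s.choose k * k.descFactorial t) * (k - t) := by ring
      _ = (s.descFactorial t * (s - t).choose (k - t)) * (k - t) := by
          rw [ih s k (by omega) h2]
      _ = s.descFactorial t * ((s - t).choose (k - t) * (k - t)) := by ring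
      _ = s.descFactorial t * ((s - t) * ((s - t) - 1).choose ((k - t) - 1)) := by rw [hkey]
      _ = (s - t) * s.descFactorial t * (s - (t + 1)).choose (k - (t + 1)) := by
          rw [e1, e2]; ring
lemma pow_le_descFactorial : ∀ t s : ℕ, (s - t) ^ (t + 1) ≤ s.descFactorial (t + 1) := by
  intro t
  induction t with
  | zero => intro s; simp
  | succ t ih =>
    intro s
    rw [Nat.descFactorial_succ]
    calc (s - (t + 1)) ^ (t + 2) = (s - (t + 1)) * (s - (t + 1)) ^ (t + 1) := by ring
      _ ≤ (s - (t + 1)) * (s - t) ^ (t + 1) :=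
          Nat.mul_le_mul le_rfl (Nat.pow_le_pow_left (by omega) _)
      _ ≤ (s - (t + 1)) * s.descFactorial (t + 1) := Nat.mul_le_mul le_rfl (ih s)
lemma tail_arith (s k m : ℕ) (hm1 : 1 ≤ m) (hm7 : m ≤ 7) (hk8 : 8 ≤ k) (hs14 : 14 ≤ s) :
    9 ^ (m + 1) * (s ^ m * (s - (m + 1)).choose (k - (m + 1))) ≤
      9 ^ 8 * (s ^ 7 * (s - 8).choose (k - 8)) := by
  have h1 : (s - (m + 1)).choose (k - (m + 1)) ≤
      (s - (m + 1)) ^ (7 - m) * (s - 8).choose (k - 8) := by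
    have h := choose_le_pow_mul_choose (7 - m) (s - (m + 1)) (k - (m + 1)) (by omega)
    have e1 : s - (m + 1) - (7 - m) = s - 8 := by omega
    have e2 : k - (m + 1) - (7 - m) = k - 8 := by omega
    rwa [e1, e2] at h
  calc 9 ^ (m + 1) * (s ^ m * (s - (m + 1)).choose (k - (m + 1)))
      ≤ 9 ^ 8 * (s ^ m * ((s - (m + 1)) ^ (7 - m) * (s - 8).choose (k - 8))) :=
        Nat.mul_le_mul (Nat.pow_le_pow_right (by norm_num) (by omega))
          (Nat.mul_le_mul le_rfl h1)
    _ ≤ 9 ^ 8 * (s ^ m * (s ^ (7 - m) * (s - 8).choose (k - 8))) :=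
        Nat.mul_le_mul le_rfl (Nat.mul_le_mul le_rfl
          (Nat.mul_le_mul (Nat.pow_le_pow_left (by omega) _) le_rfl))
    _ = 9 ^ 8 * (s ^ 7 * (s - 8).choose (k - 8)) := by
        have hm7' : m + (7 - m) = 7 := by omega
        rw [← mul_assoc (s ^ m), ← pow_add, hm7']

lemma final_arith (s k B : ℕ) (hk8 : 8 ≤ k) (hks : k ≤ s) (hS : 10 ^ 12 * k ^ 8 ≤ s)
    (hB : B ≤ 7 * (9 ^ 8 * (s ^ 7 * (s - 8).choose (k - 8)))) :
    10 * B ≤ s.choose k := by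
  have hs14 : 14 ≤ s := by
    have h1 : (1 : ℕ) ≤ k ^ 8 := Nat.one_le_pow _ _ (by omega)
    have h2 : 10 ^ 12 * 1 ≤ 10 ^ 12 * k ^ 8 := Nat.mul_le_mul le_rfl h1
    omega
  have hQpos : 0 < k.descFactorial 8 := by
    rcases Nat.eq_zero_or_pos (k.descFactorial 8) with h0 | h0
    · rw [Nat.descFactorial_eq_zero_iff_lt] at h0; omega
    · exact h0
  have hdf : k.descFactorial 8 ≤ k ^ 8 := Nat.descFactorial_le_pow k 8
  have h2 : 10 * (7 * 9 ^ 8) * (s ^ 7 * k.descFactorial 8) ≤ (s - 7) ^ 8 := by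
    have hmain : 2 ^ 8 * (10 * (7 * 9 ^ 8) * (s ^ 7 * k.descFactorial 8)) ≤
        2 ^ 8 * ((s - 7) ^ 8) := by
      calc 2 ^ 8 * (10 * (7 * 9 ^ 8) * (s ^ 7 * k.descFactorial 8))
          ≤ 2 ^ 8 * (10 * (7 * 9 ^ 8) * (s ^ 7 * k ^ 8)) :=
            Nat.mul_le_mul le_rfl (Nat.mul_le_mul le_rfl (Nat.mul_le_mul le_rfl hdf))
        _ = (2 ^ 8 * (10 * (7 * 9 ^ 8))) * (s ^ 7 * k ^ 8) := by ring
        _ ≤ 10 ^ 12 * (s ^ 7 * k ^ 8) := Nat.mul_le_mul (by norm_num) le_rfl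
        _ = s ^ 7 * (10 ^ 12 * k ^ 8) := by ring
        _ ≤ s ^ 7 * s := Nat.mul_le_mul le_rfl hS
        _ = s ^ 8 := by ring
        _ ≤ (2 * (s - 7)) ^ 8 := Nat.pow_le_pow_left (by omega) 8
        _ = 2 ^ 8 * (s - 7) ^ 8 := by rw [mul_pow]
    exact Nat.le_of_mul_le_mul_left hmain (by norm_num)
  have h3 : (s - 7) ^ 8 ≤ s.descFactorial 8 := pow_le_descFactorial 7 s
  refine Nat.le_of_mul_le_mul_right ?_ hQpos
  calc 10 * B * k.descFactorial 8
      ≤ 10 * (7 * (9 ^ 8 * (s ^ 7 * (s - 8).choose (k - 8)))) * k.descFactorial 8 :=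
        Nat.mul_le_mul (Nat.mul_le_mul le_rfl hB) le_rfl
    _ = (10 * (7 * 9 ^ 8) * (s ^ 7 * k.descFactorial 8)) * (s - 8).choose (k - 8) := by ring
    _ ≤ s.descFactorial 8 * (s - 8).choose (k - 8) :=
        Nat.mul_le_mul (le_trans h2 h3) le_rfl
    _ = s.choose k * k.descFactorial 8 :=
        (choose_mul_descFactorial_eq 8 s k hk8 hks).symm

lemma bad_card_le {G : Type*} [AddCommGroup G] [Fintype G] [DecidableEq G] (S : Finset G) (k : ℕ)
    (hcop : ∀ c : ℤ, c ≠ 0 → |c| ≤ 4 → Nat.Coprime c.natAbs (Fintype.card G))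
    (hk8 : 8 ≤ k) (hks : k ≤ S.card) (hS : 10 ^ 12 * k ^ 8 ≤ S.card) :
    10 * ((S.powersetCard k).filter fun X => ¬ Dissociated X).card ≤ S.card.choose k := by
  classical
  have hs14 : 14 ≤ S.card := by
    have h1 : (1 : ℕ) ≤ k ^ 8 := Nat.one_le_pow _ _ (by omega)
    have h2 : 10 ^ 12 * 1 ≤ 10 ^ 12 * k ^ 8 := Nat.mul_le_mul le_rfl h1
    omega
  set s := S.card with hs
  -- Step A : bad sets are covered by relation patterns
  have hsubset : ((S.powersetCard k).filter fun X => ¬ Dissociated X) ⊆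
      (Finset.Icc 1 7).biUnion fun m => (S.powersetCard k).filter fun X =>
        ∃ c : Fin (m + 1) → ℤ, (∀ i, c i ≠ 0 ∧ |c i| ≤ 4) ∧
          ∃ z : Fin (m + 1) → G, Function.Injective z ∧ (∀ i, z i ∈ X) ∧ ∑ i, c i • z i = 0 := by
    intro X hX
    rw [Finset.mem_filter] at hX
    obtain ⟨hXP, hXd⟩ := hX
    obtain ⟨m, c, z, hm1, hm7, hc, hzinj, hzX, hzsum⟩ := exists_relation_of_not_dissociated hXd
    rw [Finset.mem_biUnion]
    exact ⟨m, Finset.mem_Icc.mpr ⟨hm1, hm7⟩,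
      Finset.mem_filter.mpr ⟨hXP, c, hc, z, hzinj, hzX, hzsum⟩⟩
  -- Step B : bound for each pattern size
  have hbound : ∀ m ∈ Finset.Icc 1 7, ((S.powersetCard k).filter fun X =>
      ∃ c : Fin (m + 1) → ℤ, (∀ i, c i ≠ 0 ∧ |c i| ≤ 4) ∧
        ∃ z : Fin (m + 1) → G, Function.Injective z ∧ (∀ i, z i ∈ X) ∧
          ∑ i, c i • z i = 0).card ≤
      9 ^ 8 * (s ^ 7 * (s - 8).choose (k - 8)) := by
    intro m hm
    rw [Finset.mem_Icc] at hm
    set Cset : Finset (Fin (m + 1) → ℤ) :=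
      (Fintype.piFinset fun _ => Finset.Icc (-4 : ℤ) 4).filter fun c => ∀ i, c i ≠ 0 with hCset
    set Sols : (Fin (m + 1) → ℤ) → Finset (Fin (m + 1) → G) := fun c =>
      (Fintype.piFinset fun _ : Fin (m + 1) => S).filter
        fun z => Function.Injective z ∧ ∑ i, c i • z i = 0 with hSols
    have hsub2 : ((S.powersetCard k).filter fun X =>
        ∃ c : Fin (m + 1) → ℤ, (∀ i, c i ≠ 0 ∧ |c i| ≤ 4) ∧
          ∃ z : Fin (m + 1) → G, Function.Injective z ∧ (∀ i, z i ∈ X) ∧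
            ∑ i, c i • z i = 0) ⊆
        Cset.biUnion fun c => (Sols c).biUnion fun z =>
          (S.powersetCard k).filter fun X => ∀ i, z i ∈ X := by
      intro X hX
      rw [Finset.mem_filter] at hX
      obtain ⟨hXP, c, hc, z, hzinj, hzX, hzsum⟩ := hX
      have hXS : X ⊆ S := (Finset.mem_powersetCard.mp hXP).1
      rw [Finset.mem_biUnion]
      refine ⟨c, ?_, ?_⟩
      · rw [hCset, Finset.mem_filter]
        exact ⟨Fintype.mem_piFinset.mpr fun i => Finset.mem_Icc.mpr (abs_le.mp (hc i).2),
          fun i => (hc i).1⟩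
      · rw [Finset.mem_biUnion]
        refine ⟨z, ?_, Finset.mem_filter.mpr ⟨hXP, hzX⟩⟩
        rw [hSols]
        exact Finset.mem_filter.mpr ⟨Fintype.mem_piFinset.mpr fun i => hXS (hzX i), hzinj, hzsum⟩
    have hCcard : Cset.card ≤ 9 ^ (m + 1) := by
      calc Cset.card ≤ (Fintype.piFinset fun _ : Fin (m + 1) => Finset.Icc (-4 : ℤ) 4).card :=
            Finset.card_filter_le _ _
        _ = (Finset.Icc (-4 : ℤ) 4).card ^ (m + 1) := Fintype.card_piFinset_const _ _
        _ = 9 ^ (m + 1) := by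
            have h9 : (Finset.Icc (-4 : ℤ) 4).card = 9 := by decide
            rw [h9]
    have hstep : ((S.powersetCard k).filter fun X =>
        ∃ c : Fin (m + 1) → ℤ, (∀ i, c i ≠ 0 ∧ |c i| ≤ 4) ∧
          ∃ z : Fin (m + 1) → G, Function.Injective z ∧ (∀ i, z i ∈ X) ∧
            ∑ i, c i • z i = 0).card ≤
        9 ^ (m + 1) * (s ^ m * (s - (m + 1)).choose (k - (m + 1))) := by
      calc _ ≤ (Cset.biUnion fun c => (Sols c).biUnion fun z =>
            (S.powersetCard k).filter fun X => ∀ i, z i ∈ X).card := Finset.card_le_card hsub2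
        _ ≤ ∑ c ∈ Cset, ((Sols c).biUnion fun z =>
            (S.powersetCard k).filter fun X => ∀ i, z i ∈ X).card := Finset.card_biUnion_le
        _ ≤ ∑ _c ∈ Cset, (s ^ m * (s - (m + 1)).choose (k - (m + 1))) := by
            refine Finset.sum_le_sum fun c hcmem => ?_
            rw [hCset, Finset.mem_filter] at hcmem
            have hclast : Nat.Coprime (c (Fin.last m)).natAbs (Fintype.card G) := by
              refine hcop _ (hcmem.2 _) ?_
              exact Finset.mem_Icc.mp (Fintype.mem_piFinset.mp hcmem.1 (Fin.last m)) |> abs_le.mpr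
            calc ((Sols c).biUnion fun z =>
                  (S.powersetCard k).filter fun X => ∀ i, z i ∈ X).card
                ≤ ∑ z ∈ Sols c, ((S.powersetCard k).filter fun X => ∀ i, z i ∈ X).card :=
                  Finset.card_biUnion_le
              _ ≤ ∑ _z ∈ Sols c, (s - (m + 1)).choose (k - (m + 1)) := by
                  refine Finset.sum_le_sum fun z hzmem => ?_
                  rw [hSols, Finset.mem_filter] at hzmem
                  exact card_supersets_le S k m z hzmem.2.1
                    (fun i => Fintype.mem_piFinset.mp hzmem.1 i)
              _ = (Sols c).card * (s - (m + 1)).choose (k - (m + 1)) := by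
                  rw [Finset.sum_const, smul_eq_mul]
              _ ≤ s ^ m * (s - (m + 1)).choose (k - (m + 1)) :=
                  Nat.mul_le_mul (sols_card_le c hclast S) le_rfl
        _ = Cset.card * (s ^ m * (s - (m + 1)).choose (k - (m + 1))) := by
            rw [Finset.sum_const, smul_eq_mul]
        _ ≤ 9 ^ (m + 1) * (s ^ m * (s - (m + 1)).choose (k - (m + 1))) :=
            Nat.mul_le_mul hCcard le_rfl
    exact le_trans hstep (tail_arith s k m hm.1 hm.2 hk8 hs14)
  -- Step C : total bound
  have hcard1 : ((S.powersetCard k).filter fun X => ¬ Dissociated X).card ≤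
      7 * (9 ^ 8 * (s ^ 7 * (s - 8).choose (k - 8))) := by
    calc ((S.powersetCard k).filter fun X => ¬ Dissociated X).card
        ≤ ((Finset.Icc 1 7).biUnion fun m => (S.powersetCard k).filter fun X =>
            ∃ c : Fin (m + 1) → ℤ, (∀ i, c i ≠ 0 ∧ |c i| ≤ 4) ∧
              ∃ z : Fin (m + 1) → G, Function.Injective z ∧ (∀ i, z i ∈ X) ∧
                ∑ i, c i • z i = 0).card := Finset.card_le_card hsubset
      _ ≤ ∑ m ∈ Finset.Icc 1 7, ((S.powersetCard k).filter fun X =>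
            ∃ c : Fin (m + 1) → ℤ, (∀ i, c i ≠ 0 ∧ |c i| ≤ 4) ∧
              ∃ z : Fin (m + 1) → G, Function.Injective z ∧ (∀ i, z i ∈ X) ∧
                ∑ i, c i • z i = 0).card := Finset.card_biUnion_le
      _ ≤ ∑ _m ∈ Finset.Icc 1 7, 9 ^ 8 * (s ^ 7 * (s - 8).choose (k - 8)) :=
          Finset.sum_le_sum hbound
      _ = 7 * (9 ^ 8 * (s ^ 7 * (s - 8).choose (k - 8))) := by
          rw [Finset.sum_const, smul_eq_mul, Nat.card_Icc]
  exact final_arith s k _ hk8 hks hS hcard1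
lemma big_ev : ∀ᶠ x : ℝ in Filter.atTop, 10 ^ 22 * Real.log x ^ 28 ≤ x := by
  have h1 := Real.tendsto_exp_div_pow_atTop 28
  have h2 : ∀ᶠ t : ℝ in Filter.atTop, (10 : ℝ) ^ 22 ≤ Real.exp t / t ^ 28 :=
    h1.eventually_ge_atTop _
  have h3 := Real.tendsto_log_atTop.eventually h2
  filter_upwards [h3, Filter.eventually_ge_atTop (3 : ℝ)] with x hx hx3
  have hxpos : (0 : ℝ) < x := by linarith
  have hlogpos : 0 < Real.log x := Real.log_pos (by linarith)
  rw [Real.exp_log hxpos] at hx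
  exact (le_div_iff₀ (by positivity)).mp hx
end AuxLemmas
theorem most_subsets_dissociated_and_unstructured :
    ∃ N₀ : ℕ, ∀ N : ℕ, N₀ ≤ N → Nat.gcd N 6 = 1 →
      ∀ (G : Type) [AddCommGroup G] [Fintype G] [DecidableEq G], Fintype.card G = N →
        ∀ (S : Finset G) (k : ℕ), Useful S k →
          8 * (S.powersetCard k).card ≤
            10 * Nat.card {X : Finset G // X ⊆ S ∧ X.card = k ∧
              Dissociated X ∧ LackOfStructure X S N} := by
  obtain ⟨x₀, hx₀⟩ := Filter.eventually_atTop.mp big_ev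
  refine ⟨max ⌈x₀⌉₊ 256, ?_⟩
  intro N hN hgcd G _ _ _ hcard S k hU
  rw [Useful] at hU
  rw [hcard] at hU
  obtain ⟨⟨hS1, hS2⟩, ⟨hk1, hk2, hch1, hch2⟩, h90⟩ := hU
  have hN256 : 256 ≤ N := le_trans (le_max_right _ _) hN
  have hNx : x₀ ≤ (N : ℝ) := Nat.ceil_le.mp (le_trans (le_max_left _ _) hN)
  have hbig : 10 ^ 22 * Real.log N ^ 28 ≤ (N : ℝ) := hx₀ _ hNx
  have hN0 : (0 : ℝ) < (N : ℝ) := by exact_mod_cast (by omega : (0 : ℕ) < N)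
  have hlog1 : (1 : ℝ) ≤ Real.log N := by
    rw [Real.le_log_iff_exp_le hN0]
    calc Real.exp 1 ≤ 3 := le_of_lt (lt_trans Real.exp_one_lt_d9 (by norm_num))
      _ ≤ (N : ℝ) := by exact_mod_cast (by omega : (3 : ℕ) ≤ N)
  have hlogpos : (0 : ℝ) < Real.log N := by linarith
  have hk8 : 8 ≤ k := by
    have h8 : (8 : ℝ) ≤ Real.logb 2 N := by
      rw [Real.le_logb_iff_rpow_le (by norm_num) hN0]
      calc (2 : ℝ) ^ (8 : ℝ) = ((2 ^ 8 : ℕ) : ℝ) := by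
            rw [show (8 : ℝ) = ((8 : ℕ) : ℝ) by norm_num, Real.rpow_natCast]
            norm_num
        _ ≤ (N : ℝ) := by exact_mod_cast (by omega : (2 ^ 8 : ℕ) ≤ N)
    exact_mod_cast le_trans h8 hk1
  have hchoosepos : 0 < S.card.choose k := by
    by_contra hcon
    push_neg at hcon
    have h0 : S.card.choose k = 0 := by omega
    rw [h0] at hch1
    have hpos : (0 : ℝ) < (N : ℝ) / (2 * Real.log N ^ 8) := by positivity
    simp only [Nat.cast_zero, zero_mul] at hch1
    linarith
  have hks : k ≤ S.card := by
    by_contra hcon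
    push_neg at hcon
    rw [Nat.choose_eq_zero_of_lt hcon] at hchoosepos
    omega
  have hk5 : (k : ℝ) ≤ 5 * Real.log N := by
    simp only [Real.logb] at hk2
    have hlog2 : (0.6931471803 : ℝ) < Real.log 2 := Real.log_two_gt_d9
    have hl2 : (0 : ℝ) < Real.log 2 := by linarith
    have h5 : 3 * (Real.log N / Real.log 2) ≤ 5 * Real.log N := by
      rw [mul_div_assoc', div_le_iff₀ hl2]
      nlinarith
    linarith
  have hSlarge : 10 ^ 12 * k ^ 8 ≤ S.card := by
    have h1 : ((10 : ℝ) ^ 12 * (k : ℝ) ^ 8) ≤ (N : ℝ) / (2 ^ 12 * Real.log N ^ 20) := by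
      rw [le_div_iff₀ (by positivity)]
      calc 10 ^ 12 * (k : ℝ) ^ 8 * (2 ^ 12 * Real.log N ^ 20)
          ≤ 10 ^ 12 * (5 * Real.log N) ^ 8 * (2 ^ 12 * Real.log N ^ 20) := by
            have hkpow : (k : ℝ) ^ 8 ≤ (5 * Real.log N) ^ 8 :=
              pow_le_pow_left₀ (by positivity) hk5 8
            have := mul_le_mul_of_nonneg_left hkpow (by norm_num : (0:ℝ) ≤ 10 ^ 12)
            exact mul_le_mul_of_nonneg_right this (by positivity)
        _ = (10 ^ 12 * 5 ^ 8 * 2 ^ 12) * Real.log N ^ 28 := by ring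
        _ ≤ 10 ^ 22 * Real.log N ^ 28 := by
            apply mul_le_mul_of_nonneg_right (by norm_num) (by positivity)
        _ ≤ (N : ℝ) := hbig
    have h2 : ((10 ^ 12 * k ^ 8 : ℕ) : ℝ) < (S.card : ℝ) := by
      refine lt_of_le_of_lt ?_ (lt_of_le_of_lt h1 hS1)
      push_cast
      norm_num
    exact_mod_cast le_of_lt h2
  have hcop : ∀ c : ℤ, c ≠ 0 → |c| ≤ 4 → Nat.Coprime c.natAbs N := by
    intro c hc0 hc4
    have hN6 : Nat.Coprime N 6 := hgcd
    have hc2 : Nat.Coprime N 2 := Nat.Coprime.coprime_dvd_right (by norm_num) hN6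
    have hc3 : Nat.Coprime N 3 := Nat.Coprime.coprime_dvd_right (by norm_num) hN6
    have habs : |c| = (c.natAbs : ℤ) := Int.abs_eq_natAbs c
    have hb1 : 1 ≤ c.natAbs := Int.natAbs_pos.mpr hc0
    have hb4 : c.natAbs ≤ 4 := by
      rw [habs] at hc4
      exact_mod_cast hc4
    have hcases : c.natAbs = 1 ∨ c.natAbs = 2 ∨ c.natAbs = 3 ∨ c.natAbs = 4 := by omega
    rcases hcases with h | h | h | h <;> rw [h]
    · exact Nat.coprime_one_left N
    · exact hc2.symm
    · exact hc3.symm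
    · have := (hc2.symm).pow_left 2
      norm_num at this
      exact this
  have hbad := bad_card_le S k (fun c h1 h2 => hcard.symm ▸ hcop c h1 h2) hk8 hks hSlarge
  have hLoS : Nat.card {X : Finset G // X ⊆ S ∧ X.card = k ∧ LackOfStructure X S N} =
      ((S.powersetCard k).filter fun X => LackOfStructure X S N).card := by
    classical
    have e : {X : Finset G // X ⊆ S ∧ X.card = k ∧ LackOfStructure X S N} ≃
        {X : Finset G // X ∈ (S.powersetCard k).filter fun X => LackOfStructure X S N} :=
      Equiv.subtypeEquivRight (fun X => by
        simp [Finset.mem_filter, Finset.mem_powersetCard, and_assoc])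
    exact (Nat.card_congr e).trans (Nat.card_eq_finsetCard _)
  have hGood : Nat.card {X : Finset G // X ⊆ S ∧ X.card = k ∧
      Dissociated X ∧ LackOfStructure X S N} =
      ((S.powersetCard k).filter fun X => Dissociated X ∧ LackOfStructure X S N).card := by
    classical
    have e : {X : Finset G // X ⊆ S ∧ X.card = k ∧ Dissociated X ∧ LackOfStructure X S N} ≃
        {X : Finset G // X ∈ (S.powersetCard k).filter
          fun X => Dissociated X ∧ LackOfStructure X S N} :=
      Equiv.subtypeEquivRight (fun X => by
        simp [Finset.mem_filter, Finset.mem_powersetCard, and_assoc])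
    exact (Nat.card_congr e).trans (Nat.card_eq_finsetCard _)
  rw [hLoS] at h90
  rw [hGood]
  have hsplit : ((S.powersetCard k).filter fun X => LackOfStructure X S N).card ≤
      ((S.powersetCard k).filter fun X => Dissociated X ∧ LackOfStructure X S N).card +
      ((S.powersetCard k).filter fun X => ¬ Dissociated X).card := by
    classical
    calc ((S.powersetCard k).filter fun X => LackOfStructure X S N).card
        ≤ (((S.powersetCard k).filter fun X => Dissociated X ∧ LackOfStructure X S N) ∪
            ((S.powersetCard k).filter fun X => ¬ Dissociated X)).card := by
          apply Finset.card_le_card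
          intro X hX
          rw [Finset.mem_filter] at hX
          rw [Finset.mem_union, Finset.mem_filter, Finset.mem_filter]
          by_cases hd : Dissociated X
          · exact Or.inl ⟨hX.1, hd, hX.2⟩
          · exact Or.inr ⟨hX.1, hd⟩
      _ ≤ _ := Finset.card_union_le _ _
  have hPcard : (S.powersetCard k).card = S.card.choose k := Finset.card_powersetCard k S
  omega
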